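/- Let k be a field and V a finite-dimensional k-vector space. Let D, D' : ℤ → Submodule k V be two internal direct sum decompositions of V (i.e. V is the internal direct sum of the D(w), w ∈ ℤ, and also of the D'(w)), each with D(w) = 0 and D'(w) = 0 outside a finite set of integers. For m ∈ ℤ set F(m) = ⨆_{w ≥ m} D(w). Assume that for every m ∈ ℤ one has ⨆_{w ≥ m} D(w) = ⨆_{w ≥ m} D'(w) as submodules of V. Then there exists a k-linear automorphism g of V such that: (1) g maps D(w) onto D'(w) for every w ∈ ℤ; (2) g maps F(m) onto F(m) for every m ∈ ℤ; and (3) for every m ∈ ℤ and every v ∈ F(m), g(v) − v ∈ F(m+1). -/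

import Mathlib

/-- Two `ℤ`-gradings of a finite-dimensional vector space inducing the same
descending filtration `F m = ⨆ w ≥ m, D w` are conjugate by an automorphism
preserving the filtration and inducing the identity on the associated graded. -/
theorem gradings_with_same_filtration_conjugate
    {k V : Type*} [Field k] [AddCommGroup V] [Module k V] [FiniteDimensional k V]
    (D D' : ℤ → Submodule k V)
    (hD : DirectSum.IsInternal D) (hD' : DirectSum.IsInternal D')
    (hDfin : {w : ℤ | D w ≠ ⊥}.Finite) (hD'fin : {w : ℤ | D' w ≠ ⊥}.Finite)
    (hfil : ∀ m : ℤ, (⨆ w ≥ m, D w) = ⨆ w ≥ m, D' w) :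
    ∃ g : V ≃ₗ[k] V,
      (∀ w : ℤ, (D w).map (g : V →ₗ[k] V) = D' w) ∧
      (∀ m : ℤ, (⨆ w ≥ m, D w).map (g : V →ₗ[k] V) = ⨆ w ≥ m, D w) ∧
      (∀ m : ℤ, ∀ v ∈ (⨆ w ≥ m, D w), g v - v ∈ (⨆ w ≥ m + 1, D w)) := by
  classical
  set e := LinearEquiv.ofBijective (DirectSum.coeLinearMap D) hD with he
  set e' := LinearEquiv.ofBijective (DirectSum.coeLinearMap D') hD' with he'
  -- projection onto `D' w` inside `V`, as a linear endomorphism of `V`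
  set p : ℤ → (V →ₗ[k] V) := fun w =>
    (D' w).subtype ∘ₗ (DirectSum.component k ℤ (fun u => ↥(D' u)) w) ∘ₗ e'.symm.toLinearMap
    with hpdef
  have hp_apply : ∀ (w : ℤ) (v : V), p w v = ((e'.symm v) w : V) := fun w v => rfl
  have hp_mem : ∀ (w : ℤ) (v : V), p w v ∈ D' w := by
    intro w v; rw [hp_apply]; exact SetLike.coe_mem _
  have hp_same : ∀ (w : ℤ) (x : D' w), p w ↑x = ↑x := by
    intro w x
    rw [hp_apply, hD'.ofBijective_coeLinearMap_same]
  have hp_ne : ∀ (w u : ℤ), u ≠ w → ∀ x : D' u, p w ↑x = 0 := by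
    intro w u hu x
    rw [hp_apply, hD'.ofBijective_coeLinearMap_of_ne hu, Submodule.coe_zero]
  -- key: if `v ∈ ⨆ u ≥ w, D' u` then `v - p w v ∈ ⨆ u ≥ w + 1, D' u`
  have key : ∀ (w : ℤ) (v : V), v ∈ (⨆ u ≥ w, D' u) →
      v - p w v ∈ (⨆ u ≥ w + 1, D' u) := by
    intro w v hv
    have hle : (⨆ u ≥ w, D' u) ≤
        Submodule.comap (LinearMap.id - p w) (⨆ u ≥ w + 1, D' u) := by
      refine iSup_le fun u => iSup_le fun hu => ?_
      rcases eq_or_lt_of_le hu with h | h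
      · subst h
        intro x hx
        simp only [Submodule.mem_comap, LinearMap.sub_apply, LinearMap.id_apply]
        have : p w x = x := hp_same w ⟨x, hx⟩
        rw [this, sub_self]
        exact Submodule.zero_mem _
      · intro x hx
        simp only [Submodule.mem_comap, LinearMap.sub_apply, LinearMap.id_apply]
        have : p w x = 0 := hp_ne w u (by omega) ⟨x, hx⟩
        rw [this, sub_zero]
        exact Submodule.mem_iSup_of_mem u (Submodule.mem_iSup_of_mem (by omega) hx)
    simpa using hle hv
  -- splitting of the filtration
  have hsplit : ∀ (E : ℤ → Submodule k V) (m : ℤ),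
      (⨆ w ≥ m, E w) = E m ⊔ (⨆ w ≥ m + 1, E w) := by
    intro E m
    apply le_antisymm
    · refine iSup_le fun u => iSup_le fun hu => ?_
      rcases eq_or_lt_of_le hu with h | h
      · exact h ▸ le_sup_left
      · exact le_sup_of_le_right (le_iSup_of_le u (le_iSup_of_le (by omega) le_rfl))
    · exact sup_le (le_iSup_of_le m (le_iSup_of_le le_rfl le_rfl))
        (iSup_le fun u => iSup_le fun hu =>
          le_iSup_of_le u (le_iSup_of_le (by omega) le_rfl))
  have hdisj : ∀ (E : ℤ → Submodule k V), DirectSum.IsInternal E → ∀ m : ℤ,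
      Disjoint (E m) (⨆ w ≥ m + 1, E w) := by
    intro E hE m
    exact (hE.submodule_iSupIndep m).mono_right (iSup_le fun u => iSup_le fun hu =>
      le_iSup_of_le u (le_iSup_of_le (by omega : u ≠ m) le_rfl))
  have hrank : ∀ m : ℤ, Module.finrank k (D m) = Module.finrank k (D' m) := by
    intro m
    have h1 : Module.finrank k ↥(⨆ w ≥ m, D w)
        = Module.finrank k (D m) + Module.finrank k ↥(⨆ w ≥ m + 1, D w) := by
      rw [hsplit D m, ← Submodule.finrank_sup_add_finrank_inf_eq,
        (hdisj D hD m).eq_bot, finrank_bot, add_zero]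
    have h2 : Module.finrank k ↥(⨆ w ≥ m, D' w)
        = Module.finrank k (D' m) + Module.finrank k ↥(⨆ w ≥ m + 1, D' w) := by
      rw [hsplit D' m, ← Submodule.finrank_sup_add_finrank_inf_eq,
        (hdisj D' hD' m).eq_bot, finrank_bot, add_zero]
    rw [hfil m, hfil (m + 1)] at h1
    rw [h1] at h2
    omega
  -- the component maps
  have hmem₀ : ∀ (w : ℤ) (x : D w), ((p w) ∘ₗ (D w).subtype) x ∈ D' w :=
    fun w x => hp_mem w x
  set φ₀ : ∀ w : ℤ, (D w →ₗ[k] D' w) := fun w =>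
    LinearMap.codRestrict (D' w) ((p w) ∘ₗ (D w).subtype) (hmem₀ w) with hφ₀
  have hφ₀inj : ∀ w : ℤ, Function.Injective (φ₀ w) := by
    intro w
    rw [← LinearMap.ker_eq_bot, eq_bot_iff]
    intro x hx
    simp only [LinearMap.mem_ker] at hx
    have hx0 : p w ↑x = 0 := by
      have := congrArg (Subtype.val) hx
      simpa [hφ₀] using this
    have hx1 : (x : V) ∈ (⨆ u ≥ w, D' u) := by
      rw [← hfil w]
      exact Submodule.mem_iSup_of_mem w (Submodule.mem_iSup_of_mem le_rfl x.2)
    have hx2 := key w x hx1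
    rw [hx0, sub_zero, ← hfil (w + 1)] at hx2
    have h0 : (x : V) ∈ (⊥ : Submodule k V) :=
      (hdisj D hD w).le_bot (Submodule.mem_inf.mpr ⟨x.2, hx2⟩)
    simpa using Subtype.ext (by simpa using h0 : (x : V) = 0)
  set φ : ∀ w : ℤ, (D w ≃ₗ[k] D' w) := fun w =>
    LinearMap.linearEquivOfInjective (φ₀ w) (hφ₀inj w) (hrank w) with hφ
  have hφ_apply : ∀ (w : ℤ) (x : D w), (φ w x : V) = p w ↑x := by
    intro w x
    rw [hφ]
    rw [LinearMap.linearEquivOfInjective_apply]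
    rfl
  -- assemble the automorphism
  set Φ : (DirectSum ℤ fun w => ↥(D w)) ≃ₗ[k] (DirectSum ℤ fun w => ↥(D' w)) := DFinsupp.mapRange.linearEquiv φ with hΦ
  set g : V ≃ₗ[k] V := e.symm.trans (Φ.trans e') with hg
  have hg_apply : ∀ (w : ℤ) (x : D w), g ↑x = ↑(φ w x) := by
    intro w x
    have h1 : e.symm ↑x = DirectSum.of (fun u => ↥(D u)) w x := by
      rw [LinearEquiv.symm_apply_eq, he]
      exact (DirectSum.coeLinearMap_of D w x).symm
    have h2 : Φ (DirectSum.of (fun u => ↥(D u)) w x)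
        = DirectSum.of (fun u => ↥(D' u)) w (φ w x) := by
      show DFinsupp.mapRange (fun u (y : D u) => φ u y) (fun u => (φ u).map_zero)
          (DFinsupp.single w x) = DFinsupp.single w ((φ w) x)
      exact DFinsupp.mapRange_single
    show e' (Φ (e.symm ↑x)) = _
    rw [h1, h2, he']
    exact DirectSum.coeLinearMap_of D' w (φ w x)
  -- property (1)
  have prop1 : ∀ w : ℤ, (D w).map (g : V →ₗ[k] V) = D' w := by
    intro w
    apply le_antisymm
    · rintro _ ⟨x, hx, rfl⟩
      show g x ∈ D' w
      rw [show g x = ↑(φ w ⟨x, hx⟩) from hg_apply w ⟨x, hx⟩]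
      exact SetLike.coe_mem _
    · intro y hy
      refine ⟨↑((φ w).symm ⟨y, hy⟩), SetLike.coe_mem _, ?_⟩
      show g ↑((φ w).symm ⟨y, hy⟩) = y
      rw [hg_apply w ((φ w).symm ⟨y, hy⟩), LinearEquiv.apply_symm_apply]
  -- property (2)
  have prop2 : ∀ m : ℤ, (⨆ w ≥ m, D w).map (g : V →ₗ[k] V) = ⨆ w ≥ m, D w := by
    intro m
    rw [Submodule.map_iSup]
    simp_rw [Submodule.map_iSup]
    simp_rw [prop1]
    exact (hfil m).symm
  refine ⟨g, prop1, prop2, ?_⟩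
  -- property (3)
  intro m v hv
  have hle : (⨆ w ≥ m, D w) ≤
      Submodule.comap ((g : V →ₗ[k] V) - LinearMap.id) (⨆ w ≥ m + 1, D w) := by
    refine iSup_le fun w => iSup_le fun hw => ?_
    intro x hx
    simp only [Submodule.mem_comap, LinearMap.sub_apply, LinearMap.id_apply,
      LinearEquiv.coe_coe]
    rw [show g x = ↑(φ w ⟨x, hx⟩) from hg_apply w ⟨x, hx⟩, hφ_apply]
    have hx1 : x ∈ (⨆ u ≥ w, D' u) := by
      rw [← hfil w]
      exact Submodule.mem_iSup_of_mem w (Submodule.mem_iSup_of_mem le_rfl hx)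
    have hx2 := key w x hx1
    rw [← hfil (w + 1)] at hx2
    have hmono : (⨆ u ≥ w + 1, D u) ≤ (⨆ u ≥ m + 1, D u) :=
      iSup_le fun u => iSup_le fun hu =>
        le_iSup_of_le u (le_iSup_of_le (by omega) le_rfl)
    have := hmono hx2
    have heq : p w (↑(⟨x, hx⟩ : D w)) = p w x := rfl
    rw [heq]
    simpa [neg_sub] using (⨆ u ≥ m + 1, D u).neg_mem this
  have := hle hv
  simpa using this
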